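/- arXiv:2008.07454 — 4 statements merged into one kernel-verified Lean document; each statement's English description precedes it below -/
import Mathlib

section
/- Let σ, O, ρ, A, B be m×m complex matrices with σ² = 1, O and ρ Hermitian, and define U(θ) = exp(−(iθ/2)•σ) and C(θ) = Tr[O · A · U(θ) · B · ρ · B† · U(θ)† · A†]. Then C(θ) is real for every θ, and there exist real constants a, b, c such that C(θ) = a + b·cos θ + c·sin θ for all real θ. -/
open scoped Matrix
open NormedSpace

lemma exp_smul_of_sq_eq_one {m : ℕ} (σ : Matrix (Fin m) (Fin m) ℂ)
    (hσ : σ ^ 2 = 1) (t : ℝ) :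
    exp ((-(Complex.I * t / 2)) • σ) =
      ((Real.cos (t / 2) : ℝ) : ℂ) • (1 : Matrix (Fin m) (Fin m) ℂ)
        + (-(Complex.I * Real.sin (t / 2))) • σ := by
  set z : ℂ := -(Complex.I * t / 2) with hz
  have hz2 : z ^ 2 = -(((t : ℂ) / 2) ^ 2) := by
    rw [hz, show (-(Complex.I * (t:ℂ) / 2)) ^ 2 = Complex.I ^ 2 * ((t:ℂ)/2) ^ 2 by ring,
      Complex.I_sq]; ring
  have hzeven : ∀ k : ℕ, z ^ (2 * k) = (-1) ^ k * ((t : ℂ) / 2) ^ (2 * k) := by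
    intro k
    rw [pow_mul, hz2, pow_mul, neg_pow]
  have hσeven : ∀ k : ℕ, σ ^ (2 * k) = 1 := fun k => by rw [pow_mul, hσ, one_pow]
  have hσodd : ∀ k : ℕ, σ ^ (2 * k + 1) = σ := fun k => by
    rw [pow_succ, pow_mul, hσ, one_pow, one_mul]
  rw [exp_eq_tsum ℂ]
  refine HasSum.tsum_eq ?_
  have hc := (Complex.hasSum_cos ((t : ℂ) / 2)).smul_const (1 : Matrix (Fin m) (Fin m) ℂ)
  have hs := ((Complex.hasSum_sin ((t : ℂ) / 2)).mul_left (-Complex.I)).smul_const σ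
  have hcos : Complex.cos ((t:ℂ)/2) = ((Real.cos (t / 2) : ℝ) : ℂ) := by
    rw [Complex.ofReal_cos]; push_cast; ring_nf
  have hsin : -Complex.I * Complex.sin ((t:ℂ)/2) = -(Complex.I * ((Real.sin (t / 2) : ℝ) : ℂ)) := by
    rw [Complex.ofReal_sin]; push_cast; ring_nf
  rw [hcos] at hc
  rw [hsin] at hs
  refine HasSum.even_add_odd ?_ ?_
  · convert hc using 2 with k
    · rfl
    rw [smul_pow, hσeven k, smul_smul, hzeven k]
    congr 1
    rw [div_eq_mul_inv]
    ring
  · convert hs using 2 with k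
    · rfl
    rw [smul_pow, hσodd k, smul_smul]
    congr 1
    rw [pow_succ, hzeven k, hz, div_eq_mul_inv]
    ring

/-- The quantum cost `C(θ) = Tr[O · A · U(θ) · B · ρ · B† · U(θ)† · A†]`, with
`U(θ) = exp(−(iθ/2)•σ)` and `σ² = 1`, `O`, `ρ` Hermitian, is real-valued and of the
trigonometric form `a + b cos θ + c sin θ`. -/
theorem cost_is_real_trig
    (m : ℕ) (σ O ρ A B : Matrix (Fin m) (Fin m) ℂ)
    (hσ : σ ^ 2 = 1) (hO : O.IsHermitian) (hρ : ρ.IsHermitian)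
    (U : ℝ → Matrix (Fin m) (Fin m) ℂ)
    (hU : ∀ θ : ℝ, U θ = NormedSpace.exp ((-(Complex.I * θ / 2)) • σ))
    (C : ℝ → ℂ)
    (hC : ∀ θ : ℝ, C θ = Matrix.trace (O * A * U θ * B * ρ * Bᴴ * (U θ)ᴴ * Aᴴ)) :
    (∀ θ : ℝ, (C θ).im = 0) ∧
    ∃ a b c : ℝ, ∀ θ : ℝ,
      C θ = ((a + b * Real.cos θ + c * Real.sin θ : ℝ) : ℂ) := by
  -- realness
  have him : ∀ θ : ℝ, (C θ).im = 0 := by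
    intro θ
    have hstar : (starRingEnd ℂ) (C θ) = C θ := by
      rw [hC, ← Complex.star_def, ← Matrix.trace_conjTranspose]
      have h1 : (O * A * U θ * B * ρ * Bᴴ * (U θ)ᴴ * Aᴴ)ᴴ
          = (A * U θ * B * ρ * Bᴴ * (U θ)ᴴ * Aᴴ) * O := by
        simp only [Matrix.conjTranspose_mul, Matrix.conjTranspose_conjTranspose, hO.eq, hρ.eq]
        noncomm_ring
      rw [h1, Matrix.trace_mul_comm]
      congr 1
      noncomm_ring
    rw [← Complex.conj_eq_iff_im]
    exact hstar
  refine ⟨him, ?_⟩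
  -- trig form, first with complex coefficients
  set T1 : ℂ := (O * A * B * ρ * Bᴴ * Aᴴ).trace with hT1
  set T2 : ℂ := (O * A * B * ρ * Bᴴ * σᴴ * Aᴴ).trace with hT2
  set T3 : ℂ := (O * A * σ * B * ρ * Bᴴ * Aᴴ).trace with hT3
  set T4 : ℂ := (O * A * σ * B * ρ * Bᴴ * σᴴ * Aᴴ).trace with hT4
  set α : ℂ := (T1 + T4) / 2 with hα
  set β : ℂ := (T1 - T4) / 2 with hβ
  set γ : ℂ := Complex.I * (T2 - T3) / 2 with hγ
  have hkey : ∀ θ : ℝ, C θ = α + β * Real.cos θ + γ * Real.sin θ := by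
    intro θ
    have hUθ : U θ = ((Real.cos (θ / 2) : ℝ) : ℂ) • (1 : Matrix (Fin m) (Fin m) ℂ)
        + (-(Complex.I * Real.sin (θ / 2))) • σ := by
      rw [hU]; exact exp_smul_of_sq_eq_one σ hσ θ
    rw [hC, hUθ]
    simp only [Matrix.conjTranspose_add, Matrix.conjTranspose_smul, Matrix.conjTranspose_one,
      Matrix.mul_add, Matrix.add_mul, smul_mul_assoc, mul_smul_comm, Matrix.mul_one,
      Matrix.one_mul, Matrix.trace_add, Matrix.trace_smul, smul_eq_mul,
      star_neg, star_mul', Complex.star_def, Complex.conj_ofReal, Complex.conj_I,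
      ← hT1, ← hT2, ← hT3, ← hT4]
    have hpy : ((Real.sin (θ/2) : ℝ) : ℂ) ^ 2 + ((Real.cos (θ/2) : ℝ) : ℂ) ^ 2 = 1 := by
      rw [← Complex.ofReal_pow, ← Complex.ofReal_pow, ← Complex.ofReal_add,
        Real.sin_sq_add_cos_sq, Complex.ofReal_one]
    have hcosθ : ((Real.cos θ : ℝ) : ℂ) = 2 * ((Real.cos (θ/2) : ℝ) : ℂ) ^ 2 - 1 := by
      rw [show θ = 2 * (θ/2) by ring, Real.cos_two_mul]
      push_cast
      ring_nf
    have hsinθ : ((Real.sin θ : ℝ) : ℂ)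
        = 2 * ((Real.sin (θ/2) : ℝ) : ℂ) * ((Real.cos (θ/2) : ℝ) : ℂ) := by
      rw [show θ = 2 * (θ/2) by ring, Real.sin_two_mul]
      push_cast
      ring_nf
    rw [hcosθ, hsinθ, hα, hβ, hγ]
    linear_combination T4 * hpy - ((Real.sin (θ/2) : ℝ) : ℂ) ^ 2 * T4 * Complex.I_sq
  -- now extract real coefficients
  have h0 := him 0
  have hpi := him Real.pi
  have hhalf := him (Real.pi / 2)
  rw [hkey 0] at h0
  rw [hkey Real.pi] at hpi
  rw [hkey (Real.pi / 2)] at hhalf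
  simp [Complex.add_im, Complex.mul_im, Complex.ofReal_im, Complex.ofReal_re] at h0 hpi hhalf
  have hαim : α.im = 0 := by linarith
  have hβim : β.im = 0 := by linarith
  have hγim : γ.im = 0 := by linarith
  refine ⟨α.re, β.re, γ.re, fun θ => ?_⟩
  rw [hkey θ]
  have hα' : α = (α.re : ℂ) := Complex.ext rfl (by simp [hαim])
  have hβ' : β = (β.re : ℂ) := Complex.ext rfl (by simp [hβim])
  have hγ' : γ = (γ.re : ℂ) := Complex.ext rfl (by simp [hγim])
  rw [hα', hβ', hγ']
  rw [Complex.ofReal_add, Complex.ofReal_add, Complex.ofReal_mul, Complex.ofReal_mul]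
  simp
end

section
/- Let p ∈ ℕ and let C : (Fin p → ℝ) → ℝ be continuously differentiable such that for every coordinate l and every point θ, the one-variable function t ↦ C(θ with l-th coordinate replaced by t) has the form a + b·cos t + c·sin t (with a, b, c depending on the other coordinates). Then for all coordinates i, j (possibly equal) and every θ, the mixed partial derivative exists and satisfies ∂ᵢ∂ⱼC(θ) = (1/4)·[ C(θ + (π/2)eᵢ + (π/2)eⱼ) + C(θ − (π/2)eᵢ − (π/2)eⱼ) − C(θ + (π/2)eᵢ − (π/2)eⱼ) − C(θ − (π/2)eᵢ + (π/2)eⱼ) ]. -/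
lemma trig_param_shift {f : ℝ → ℝ} {a b c : ℝ}
    (hf : ∀ t, f t = a + b * Real.cos t + c * Real.sin t) (s : ℝ) :
    HasDerivAt f ((f (s + Real.pi/2) - f (s - Real.pi/2)) / 2) s := by
  have hfe : f = fun t => a + b * Real.cos t + c * Real.sin t := funext hf
  subst hfe
  have h : HasDerivAt (fun t => a + b * Real.cos t + c * Real.sin t)
      (-(b * Real.sin s) + c * Real.cos s) s := by
    have := (((Real.hasDerivAt_cos s).const_mul b).const_add a).add
      ((Real.hasDerivAt_sin s).const_mul c)
    exact this.congr_deriv (by ring)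
  convert h using 1
  simp only [Real.cos_add, Real.sin_add, Real.cos_sub, Real.sin_sub,
    Real.cos_pi_div_two, Real.sin_pi_div_two]
  ring

lemma update_add_fun {p : ℕ} (θ v : Fin p → ℝ) (i : Fin p) (t : ℝ) :
    Function.update θ i t + v = Function.update (θ + v) i (t + v i) := by
  funext k
  by_cases h : k = i
  · subst h; simp
  · simp [Function.update_of_ne h]

lemma update_sub_fun {p : ℕ} (θ v : Fin p → ℝ) (i : Fin p) (t : ℝ) :
    Function.update θ i t - v = Function.update (θ - v) i (t - v i) := by
  funext k
  by_cases h : k = i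
  · subst h; simp
  · simp [Function.update_of_ne h]

lemma update_self_add {p : ℕ} (θ : Fin p → ℝ) (i : Fin p) (x : ℝ) :
    Function.update θ i (θ i + x) = θ + Pi.single i x := by
  funext k
  by_cases h : k = i
  · subst h; simp
  · simp [Function.update_of_ne h, Pi.single_apply, h]

lemma update_self_sub {p : ℕ} (θ : Fin p → ℝ) (i : Fin p) (x : ℝ) :
    Function.update θ i (θ i - x) = θ - Pi.single i x := by
  funext k
  by_cases h : k = i
  · subst h; simp
  · simp [Function.update_of_ne h, Pi.single_apply, h]

/-- Partial derivative of `C` with respect to the `i`-th coordinate. -/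
noncomputable def pderiv' {p : ℕ} (i : Fin p) (C : (Fin p → ℝ) → ℝ) : (Fin p → ℝ) → ℝ :=
  fun θ => deriv (fun t => C (Function.update θ i t)) (θ i)

lemma pderiv'_eq {p : ℕ} (C : (Fin p → ℝ) → ℝ)
    (htrig : ∀ (l : Fin p) (θ : Fin p → ℝ), ∃ a b c : ℝ, ∀ t : ℝ,
      C (Function.update θ l t) = a + b * Real.cos t + c * Real.sin t)
    (j : Fin p) (η : Fin p → ℝ) :
    pderiv' j C η
      = (C (η + Pi.single j (Real.pi/2)) - C (η - Pi.single j (Real.pi/2))) / 2 := by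
  obtain ⟨a, b, c, h⟩ := htrig j η
  have hd := (trig_param_shift h (η j)).deriv
  unfold pderiv'
  rw [hd, update_self_add, update_self_sub]

/-- A shifted trig line: `t ↦ C (update η i (t + d))` is trig in `t`. -/
lemma shifted_trig {p : ℕ} (C : (Fin p → ℝ) → ℝ)
    (htrig : ∀ (l : Fin p) (θ : Fin p → ℝ), ∃ a b c : ℝ, ∀ t : ℝ,
      C (Function.update θ l t) = a + b * Real.cos t + c * Real.sin t)
    (i : Fin p) (η : Fin p → ℝ) (d : ℝ) :
    ∃ a b c : ℝ, ∀ t : ℝ,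
      C (Function.update η i (t + d)) = a + b * Real.cos t + c * Real.sin t := by
  obtain ⟨a, b, c, h⟩ := htrig i η
  refine ⟨a, b * Real.cos d + c * Real.sin d, c * Real.cos d - b * Real.sin d, fun t => ?_⟩
  rw [h (t + d), Real.cos_add, Real.sin_add]
  ring

/-- Four-point parameter-shift formula for the Hessian matrix element
`Hᵢⱼ = ∂ᵢ∂ⱼC` of a cost that is trigonometric in each coordinate: the mixed partial
derivative exists and equals the stated four-point combination. -/
theorem hessian_parameter_shift {p : ℕ} (C : (Fin p → ℝ) → ℝ)
    (hC1 : ContDiff ℝ 1 C)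
    (htrig : ∀ (l : Fin p) (θ : Fin p → ℝ), ∃ a b c : ℝ, ∀ t : ℝ,
      C (Function.update θ l t) = a + b * Real.cos t + c * Real.sin t)
    (i j : Fin p) (θ : Fin p → ℝ) :
    HasDerivAt (fun t => pderiv' j C (Function.update θ i t))
      ((1 / 4) * (C (θ + Pi.single i (Real.pi / 2) + Pi.single j (Real.pi / 2))
          + C (θ - Pi.single i (Real.pi / 2) - Pi.single j (Real.pi / 2))
          - C (θ + Pi.single i (Real.pi / 2) - Pi.single j (Real.pi / 2))
          - C (θ - Pi.single i (Real.pi / 2) + Pi.single j (Real.pi / 2))))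
      (θ i) := by
  set w : Fin p → ℝ := Pi.single j (Real.pi / 2) with hw
  set v : Fin p → ℝ := Pi.single i (Real.pi / 2) with hv
  -- the two shifted one-variable functions
  set Fp : ℝ → ℝ := fun t => C (Function.update (θ + w) i (t + w i)) with hFp
  set Fm : ℝ → ℝ := fun t => C (Function.update (θ - w) i (t - w i)) with hFm
  have hg : (fun t => pderiv' j C (Function.update θ i t))
      = fun t => (Fp t - Fm t) / 2 := by
    funext t
    rw [pderiv'_eq C htrig j (Function.update θ i t)]
    rw [hFp, hFm]
    rw [← hw]
    simp only [update_add_fun θ w i t, update_sub_fun θ w i t]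
  rw [hg]
  obtain ⟨a₁, b₁, c₁, h₁⟩ := shifted_trig C htrig i (θ + w) (w i)
  have h₂' := shifted_trig C htrig i (θ - w) (-(w i))
  obtain ⟨a₂, b₂, c₂, h₂⟩ := h₂'
  have h₂'' : ∀ t : ℝ, Fm t = a₂ + b₂ * Real.cos t + c₂ * Real.sin t := by
    intro t
    have := h₂ t
    simpa [hFm, sub_eq_add_neg] using this
  have hdp := trig_param_shift (f := Fp) h₁ (θ i)
  have hdm := trig_param_shift (f := Fm) h₂'' (θ i)
  have hD := (hdp.sub hdm).div_const 2
  refine hD.congr_deriv ?_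
  -- now identify the four points
  have e1 : Fp (θ i + Real.pi/2) = C (θ + v + w) := by
    show C (Function.update (θ + w) i (θ i + Real.pi/2 + w i)) = _
    congr 1
    have h' : θ i + Real.pi/2 + w i = (θ + w) i + Real.pi/2 := by
      simp [Pi.add_apply]; ring
    rw [h', update_self_add]
    abel
  have e2 : Fp (θ i - Real.pi/2) = C (θ - v + w) := by
    show C (Function.update (θ + w) i (θ i - Real.pi/2 + w i)) = _
    congr 1
    have h' : θ i - Real.pi/2 + w i = (θ + w) i - Real.pi/2 := by
      simp [Pi.add_apply]; ring
    rw [h', update_self_sub]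
    abel
  have e3 : Fm (θ i + Real.pi/2) = C (θ + v - w) := by
    show C (Function.update (θ - w) i (θ i + Real.pi/2 - w i)) = _
    congr 1
    have h' : θ i + Real.pi/2 - w i = (θ - w) i + Real.pi/2 := by
      simp [Pi.sub_apply]; ring
    rw [h', update_self_add]
    abel
  have e4 : Fm (θ i - Real.pi/2) = C (θ - v - w) := by
    show C (Function.update (θ - w) i (θ i - Real.pi/2 - w i)) = _
    congr 1
    have h' : θ i - Real.pi/2 - w i = (θ - w) i - Real.pi/2 := by
      simp [Pi.sub_apply]; ring
    rw [h', update_self_sub]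
    abel
  rw [e1, e2, e3, e4]
  ring
end

section
/- Let p ∈ ℕ and let C : (Fin p → ℝ) → ℝ be continuously differentiable such that for every coordinate l and every point θ, the one-variable function t ↦ C(θ with l-th coordinate replaced by t) has the form a + b·cos t + c·sin t (with a, b, c depending on the other coordinates). Then for all coordinates i, j and every θ, the Hessian matrix element satisfies the bound |∂ᵢ∂ⱼC(θ)| ≤ (1/2)·( |∂ᵢC(θ + (π/2)eⱼ)| + |∂ᵢC(θ − (π/2)eⱼ)| ). -/
lemma hasDerivAt_trig (a b c x : ℝ) :
    HasDerivAt (fun t => a + b * Real.cos t + c * Real.sin t)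
      (-b * Real.sin x + c * Real.cos x) x := by
  have h : HasDerivAt (fun t => a + b * Real.cos t + c * Real.sin t)
      (b * -Real.sin x + c * Real.cos x) x :=
    (((Real.hasDerivAt_cos x).const_mul b).const_add a).add
      ((Real.hasDerivAt_sin x).const_mul c)
  simpa [neg_mul, mul_neg] using h

lemma hasDerivAt_trig_add (a b c v x : ℝ) :
    HasDerivAt (fun t => a + b * Real.cos (t + v) + c * Real.sin (t + v))
      (-b * Real.sin (x + v) + c * Real.cos (x + v)) x := by
  have h := (hasDerivAt_trig a b c (x + v)).comp x ((hasDerivAt_id x).add_const v)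
  simpa [Function.comp_def] using h

lemma hasDerivAt_trig_sub (a b c v x : ℝ) :
    HasDerivAt (fun t => a + b * Real.cos (t - v) + c * Real.sin (t - v))
      (-b * Real.sin (x - v) + c * Real.cos (x - v)) x := by
  have h := (hasDerivAt_trig a b c (x - v)).comp x ((hasDerivAt_id x).sub_const v)
  simpa [Function.comp_def] using h

lemma update_add' {p : ℕ} (θ s : Fin p → ℝ) (i : Fin p) (t : ℝ) :
    Function.update θ i t + s = Function.update (θ + s) i (t + s i) := by
  funext k
  rcases eq_or_ne k i with rfl | h
  · simp
  · simp [Function.update_of_ne h]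

lemma update_sub' {p : ℕ} (θ s : Fin p → ℝ) (i : Fin p) (t : ℝ) :
    Function.update θ i t - s = Function.update (θ - s) i (t - s i) := by
  funext k
  rcases eq_or_ne k i with rfl | h
  · simp
  · simp [Function.update_of_ne h]

lemma add_single_eq {p : ℕ} (θ : Fin p → ℝ) (j : Fin p) (v : ℝ) :
    θ + Pi.single j v = Function.update θ j (θ j + v) := by
  funext k
  rcases eq_or_ne k j with rfl | h
  · simp
  · simp [Function.update_of_ne h, Pi.single_eq_of_ne h]

lemma sub_single_eq {p : ℕ} (θ : Fin p → ℝ) (j : Fin p) (v : ℝ) :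
    θ - Pi.single j v = Function.update θ j (θ j - v) := by
  funext k
  rcases eq_or_ne k j with rfl | h
  · simp
  · simp [Function.update_of_ne h, Pi.single_eq_of_ne h]

/-- Bound on the Hessian matrix elements of a cost that is trigonometric in each coordinate:
`|∂ᵢ∂ⱼC(θ)| ≤ (1/2)(|∂ᵢC(θ + (π/2)eⱼ)| + |∂ᵢC(θ − (π/2)eⱼ)|)`. -/
theorem hessian_bound {p : ℕ} (C : (Fin p → ℝ) → ℝ)
    (hC1 : ContDiff ℝ 1 C)
    (htrig : ∀ (l : Fin p) (θ : Fin p → ℝ), ∃ a b c : ℝ, ∀ t : ℝ,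
      C (Function.update θ l t) = a + b * Real.cos t + c * Real.sin t)
    (i j : Fin p) (θ : Fin p → ℝ) :
    |pderiv' i (pderiv' j C) θ| ≤
      (1 / 2) * (|pderiv' i C (θ + Pi.single j (Real.pi / 2))|
        + |pderiv' i C (θ - Pi.single j (Real.pi / 2))|) := by
  set s : Fin p → ℝ := Pi.single j (Real.pi / 2) with hs
  -- Parameter shift rule for the j-th partial derivative.
  have hshift : ∀ θ' : Fin p → ℝ,
      pderiv' j C θ' = (1 / 2) * (C (θ' + s) - C (θ' - s)) := by
    intro θ'
    obtain ⟨a, b, c, h⟩ := htrig j θ'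
    have hfun : (fun t => C (Function.update θ' j t))
        = fun t => a + b * Real.cos t + c * Real.sin t := funext h
    have hplus : θ' + s = Function.update θ' j (θ' j + Real.pi / 2) := add_single_eq θ' j _
    have hminus : θ' - s = Function.update θ' j (θ' j - Real.pi / 2) := sub_single_eq θ' j _
    simp only [pderiv']
    rw [hfun, (hasDerivAt_trig a b c (θ' j)).deriv, hplus, hminus, h, h,
      Real.cos_add, Real.sin_add, Real.cos_sub, Real.sin_sub,
      Real.cos_pi_div_two, Real.sin_pi_div_two]
    ring
  obtain ⟨aP, bP, cP, hP⟩ := htrig i (θ + s)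
  obtain ⟨aM, bM, cM, hM⟩ := htrig i (θ - s)
  have eP : pderiv' i C (θ + s)
      = -bP * Real.sin (θ i + s i) + cP * Real.cos (θ i + s i) := by
    simp only [pderiv']
    rw [show (fun t => C (Function.update (θ + s) i t))
        = fun t => aP + bP * Real.cos t + cP * Real.sin t from funext hP, Pi.add_apply,
      (hasDerivAt_trig aP bP cP (θ i + s i)).deriv]
  have eM : pderiv' i C (θ - s)
      = -bM * Real.sin (θ i - s i) + cM * Real.cos (θ i - s i) := by
    simp only [pderiv']
    rw [show (fun t => C (Function.update (θ - s) i t))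
        = fun t => aM + bM * Real.cos t + cM * Real.sin t from funext hM, Pi.sub_apply,
      (hasDerivAt_trig aM bM cM (θ i - s i)).deriv]
  have key : pderiv' i (pderiv' j C) θ
      = (1 / 2) * (pderiv' i C (θ + s) - pderiv' i C (θ - s)) := by
    have hfun : (fun t => pderiv' j C (Function.update θ i t))
        = fun t => (1 / 2) * ((aP + bP * Real.cos (t + s i) + cP * Real.sin (t + s i))
            - (aM + bM * Real.cos (t - s i) + cM * Real.sin (t - s i))) := by
      funext t
      rw [hshift, update_add', update_sub', hP, hM]
    have hD : HasDerivAt (fun t => (1 / 2) *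
        ((aP + bP * Real.cos (t + s i) + cP * Real.sin (t + s i))
          - (aM + bM * Real.cos (t - s i) + cM * Real.sin (t - s i))))
        ((1 / 2) * ((-bP * Real.sin (θ i + s i) + cP * Real.cos (θ i + s i))
          - (-bM * Real.sin (θ i - s i) + cM * Real.cos (θ i - s i)))) (θ i) :=
      ((hasDerivAt_trig_add aP bP cP (s i) (θ i)).sub
        (hasDerivAt_trig_sub aM bM cM (s i) (θ i))).const_mul (1 / 2)
    show deriv (fun t => pderiv' j C (Function.update θ i t)) (θ i) = _
    rw [hfun, hD.deriv, eP, eM]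
  rw [key, abs_mul, abs_of_nonneg (by norm_num : (0:ℝ) ≤ 1/2)]
  exact mul_le_mul_of_nonneg_left (abs_sub _ _) (by norm_num)
end

section
/- Let f : ℝ → ℝ be of the form f(θ) = a + b·cos θ + c·sin θ for real constants a, b, c, and let N ∈ ℕ. Then the N-th derivative of f satisfies f^{(N)}(θ) = 2^{−N} · Σ_ω d(ω,N) · f(θ + ω·π), where the sum runs over the support of ω for the given N, and d(ω,N) are the Pascal-tree coefficients: d(0,0) = 1; d(±1/2,1) = ±1; for even N ≥ 2, d(0,N) = (−1)^{N/2}·2^{N−1} and d(±1,N) = (−1)^{(N−2)/2}·2^{N−2} with support {0,±1}; for odd N ≥ 3, d(±1/2,N) = ±(−1)^{(N−1)/2}·3·2^{N−3} and d(±3/2,N) = ∓(−1)^{(N−1)/2}·2^{N−3} with support {±1/2,±3/2}. -/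
/-- The Pascal-tree coefficients `d(ω, N)`. -/
def pascalD (ω : ℚ) (N : ℕ) : ℤ :=
  if N = 0 then (if ω = 0 then 1 else 0)
  else if N = 1 then (if ω = 1/2 then 1 else if ω = -1/2 then -1 else 0)
  else if N % 2 = 0 then
    (if ω = 0 then (-1) ^ (N / 2) * 2 ^ (N - 1)
     else if ω = 1 ∨ ω = -1 then (-1) ^ ((N - 2) / 2) * 2 ^ (N - 2)
     else 0)
  else
    (if ω = 1/2 then (-1) ^ ((N - 1) / 2) * 3 * 2 ^ (N - 3)
     else if ω = -1/2 then -((-1) ^ ((N - 1) / 2) * 3 * 2 ^ (N - 3))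
     else if ω = 3/2 then -((-1) ^ ((N - 1) / 2) * 2 ^ (N - 3))
     else if ω = -3/2 then (-1) ^ ((N - 1) / 2) * 2 ^ (N - 3)
     else 0)

/-- The support of the Pascal-tree coefficients at order `N`. -/
def pascalSupport (N : ℕ) : Finset ℚ :=
  if N = 0 then {0}
  else if N = 1 then {1/2, -1/2}
  else if N % 2 = 0 then {0, 1, -1}
  else {1/2, -1/2, 3/2, -3/2}

lemma cos_add_three_halves (x : ℝ) : Real.cos (x + (3/2)*Real.pi) = Real.sin x := by
  have h : x + (3/2)*Real.pi = (x + Real.pi) + Real.pi/2 := by ring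
  rw [h, Real.cos_add_pi_div_two, Real.sin_add_pi]; ring

lemma sin_add_three_halves (x : ℝ) : Real.sin (x + (3/2)*Real.pi) = -Real.cos x := by
  have h : x + (3/2)*Real.pi = (x + Real.pi) + Real.pi/2 := by ring
  rw [h, Real.sin_add_pi_div_two, Real.cos_add_pi]

lemma cos_sub_three_halves (x : ℝ) : Real.cos (x - (3/2)*Real.pi) = -Real.sin x := by
  have h : x - (3/2)*Real.pi = (x - Real.pi) - Real.pi/2 := by ring
  rw [h, Real.cos_sub_pi_div_two, Real.sin_sub_pi]

lemma sin_sub_three_halves (x : ℝ) : Real.sin (x - (3/2)*Real.pi) = Real.cos x := by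
  have h : x - (3/2)*Real.pi = (x - Real.pi) - Real.pi/2 := by ring
  rw [h, Real.sin_sub_pi_div_two, Real.cos_sub_pi]; ring

lemma cos_add_nat_mul_pi' (x : ℝ) (k : ℕ) :
    Real.cos (x + k * Real.pi) = (-1)^k * Real.cos x := by
  have := Real.cos_add_int_mul_pi x (k : ℤ)
  push_cast at this
  simpa using this

lemma sin_add_nat_mul_pi' (x : ℝ) (k : ℕ) :
    Real.sin (x + k * Real.pi) = (-1)^k * Real.sin x := by
  have := Real.sin_add_int_mul_pi x (k : ℤ)
  push_cast at this
  simpa using this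

lemma key (a b c : ℝ) (f : ℝ → ℝ)
    (hf : ∀ θ : ℝ, f θ = a + b * Real.cos θ + c * Real.sin θ) (N : ℕ) (θ : ℝ) :
    iteratedDeriv N f θ = (if N = 0 then a else 0)
      + b * Real.cos (θ + N * (Real.pi/2)) + c * Real.sin (θ + N * (Real.pi/2)) := by
  induction N generalizing θ with
  | zero => simpa using hf θ
  | succ n ih =>
    rw [iteratedDeriv_succ]
    have hfun : iteratedDeriv n f = fun x => (if n = 0 then a else 0)
        + b * Real.cos (x + n * (Real.pi/2)) + c * Real.sin (x + n * (Real.pi/2)) :=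
      funext fun x => ih x
    rw [hfun]
    have h1 : HasDerivAt (fun x : ℝ => (if n = 0 then a else 0)
        + b * Real.cos (x + n * (Real.pi/2)) + c * Real.sin (x + n * (Real.pi/2)))
        (b * (-Real.sin (θ + n * (Real.pi/2))) + c * Real.cos (θ + n * (Real.pi/2))) θ := by
      have hc : HasDerivAt (fun x : ℝ => Real.cos (x + n * (Real.pi/2)))
          (-Real.sin (θ + n * (Real.pi/2)) * 1) θ :=
        (((hasDerivAt_id θ).add_const _)).cos
      have hs : HasDerivAt (fun x : ℝ => Real.sin (x + n * (Real.pi/2)))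
          (Real.cos (θ + n * (Real.pi/2)) * 1) θ :=
        (((hasDerivAt_id θ).add_const _)).sin
      have := ((hc.const_mul b).const_add (if n = 0 then a else 0)).add (hs.const_mul c)
      exact this.congr_deriv (by ring)
    rw [h1.deriv]
    have h2 : θ + ((n : ℝ) + 1) * (Real.pi/2) = (θ + n * (Real.pi/2)) + Real.pi/2 := by ring
    push_cast
    rw [h2, Real.cos_add_pi_div_two, Real.sin_add_pi_div_two]
    simp

/-- `N`-th order parameter shift rule: for `f(θ) = a + b cos θ + c sin θ`,
`f⁽ᴺ⁾(θ) = 2⁻ᴺ Σ_ω d(ω,N) f(θ + ωπ)`, with `d` the Pascal-tree coefficients. -/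
theorem nth_order_parameter_shift (a b c : ℝ) (f : ℝ → ℝ)
    (hf : ∀ θ : ℝ, f θ = a + b * Real.cos θ + c * Real.sin θ) (N : ℕ) (θ : ℝ) :
    iteratedDeriv N f θ =
      (1 / 2 ^ N) * ∑ ω ∈ pascalSupport N, (pascalD ω N : ℝ) * f (θ + (ω : ℝ) * Real.pi) := by
  rw [key a b c f hf N θ]
  rcases Nat.lt_or_ge N 2 with h2 | h2
  · interval_cases N
    · -- N = 0
      simp [pascalSupport, pascalD, hf θ]
    · -- N = 1
      have hs : pascalSupport 1 = {1/2, -1/2} := by simp [pascalSupport]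
      rw [hs, Finset.sum_insert (by norm_num), Finset.sum_singleton]
      have hd1 : ((pascalD (1/2) 1 : ℤ) : ℝ) = 1 := by norm_num [pascalD]
      have hd2 : ((pascalD (-1/2) 1 : ℤ) : ℝ) = -1 := by norm_num [pascalD]
      rw [hd1, hd2, hf, hf]
      have e1 : θ + ((1/2 : ℚ) : ℝ) * Real.pi = θ + Real.pi/2 := by push_cast; ring
      have e2 : θ + ((-1/2 : ℚ) : ℝ) * Real.pi = θ - Real.pi/2 := by push_cast; ring
      rw [e1, e2, Real.cos_add_pi_div_two, Real.sin_add_pi_div_two,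
        Real.cos_sub_pi_div_two, Real.sin_sub_pi_div_two]
      push_cast
      rw [show θ + (1 : ℝ) * (Real.pi/2) = θ + Real.pi/2 by ring,
        Real.cos_add_pi_div_two, Real.sin_add_pi_div_two]
      ring
  · rcases Nat.even_or_odd N with ⟨k, hk⟩ | ⟨k, hk⟩
    · -- even, N = 2m+2
      obtain ⟨m, rfl⟩ : ∃ m, N = 2*m + 2 := ⟨k - 1, by omega⟩
      have hs : pascalSupport (2*m+2) = {0, 1, -1} := by
        unfold pascalSupport
        rw [if_neg (by omega), if_neg (by omega), if_pos (by omega)]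
      have hd0 : ((pascalD 0 (2*m+2) : ℤ) : ℝ) = (-1)^(m+1) * 2^(2*m+1) := by
        unfold pascalD
        rw [if_neg (by omega), if_neg (by omega), if_pos (by omega), if_pos rfl,
          show (2*m+2)/2 = m+1 by omega, show 2*m+2-1 = 2*m+1 by omega]
        push_cast; ring
      have hd1 : ((pascalD 1 (2*m+2) : ℤ) : ℝ) = (-1)^m * 2^(2*m) := by
        unfold pascalD
        rw [if_neg (by omega), if_neg (by omega), if_pos (by omega), if_neg (by norm_num),
          if_pos (by norm_num), show (2*m+2-2)/2 = m by omega, show 2*m+2-2 = 2*m by omega]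
        push_cast; ring
      have hdm1 : ((pascalD (-1) (2*m+2) : ℤ) : ℝ) = (-1)^m * 2^(2*m) := by
        unfold pascalD
        rw [if_neg (by omega), if_neg (by omega), if_pos (by omega), if_neg (by norm_num),
          if_pos (by norm_num), show (2*m+2-2)/2 = m by omega, show 2*m+2-2 = 2*m by omega]
        push_cast; ring
      rw [hs, Finset.sum_insert (by norm_num), Finset.sum_insert (by norm_num),
        Finset.sum_singleton, hd0, hd1, hdm1, hf, hf, hf, if_neg (by omega)]
      have e0 : θ + ((0 : ℚ) : ℝ) * Real.pi = θ := by push_cast; ring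
      have e1 : θ + ((1 : ℚ) : ℝ) * Real.pi = θ + Real.pi := by push_cast; ring
      have e2 : θ + ((-1 : ℚ) : ℝ) * Real.pi = θ - Real.pi := by push_cast; ring
      have eL : θ + ((2*m+2 : ℕ) : ℝ) * (Real.pi/2) = θ + (m+1 : ℕ) * Real.pi := by
        push_cast; ring
      rw [e0, e1, e2, eL, cos_add_nat_mul_pi', sin_add_nat_mul_pi',
        Real.cos_add_pi, Real.sin_add_pi, Real.cos_sub_pi, Real.sin_sub_pi]
      have hp : (2:ℝ)^(2*m+2) = 2^(2*m) * 4 := by rw [pow_add]; norm_num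
      have hp1 : (2:ℝ)^(2*m+1) = 2^(2*m) * 2 := by rw [pow_add]; norm_num
      have hq : ((-1:ℝ))^(m+1) = -(-1)^m := by rw [pow_succ]; ring
      have h2m : (2:ℝ)^(2*m) ≠ 0 := by positivity
      rw [hp, hp1, hq]
      field_simp
      ring
    · -- odd, N = 2m+3
      obtain ⟨m, rfl⟩ : ∃ m, N = 2*m + 3 := ⟨k - 1, by omega⟩
      have hs : pascalSupport (2*m+3) = {1/2, -1/2, 3/2, -3/2} := by
        unfold pascalSupport
        rw [if_neg (by omega), if_neg (by omega), if_neg (by omega)]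
      have hd1 : ((pascalD (1/2) (2*m+3) : ℤ) : ℝ) = (-1)^(m+1) * 3 * 2^(2*m) := by
        unfold pascalD
        rw [if_neg (by omega), if_neg (by omega), if_neg (by omega), if_pos rfl,
          show (2*m+3-1)/2 = m+1 by omega, show 2*m+3-3 = 2*m by omega]
        push_cast; ring
      have hd2 : ((pascalD (-1/2) (2*m+3) : ℤ) : ℝ) = -((-1)^(m+1) * 3 * 2^(2*m)) := by
        unfold pascalD
        rw [if_neg (by omega), if_neg (by omega), if_neg (by omega), if_neg (by norm_num),
          if_pos rfl, show (2*m+3-1)/2 = m+1 by omega, show 2*m+3-3 = 2*m by omega]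
        push_cast; ring
      have hd3 : ((pascalD (3/2) (2*m+3) : ℤ) : ℝ) = -((-1)^(m+1) * 2^(2*m)) := by
        unfold pascalD
        rw [if_neg (by omega), if_neg (by omega), if_neg (by omega), if_neg (by norm_num),
          if_neg (by norm_num), if_pos rfl,
          show (2*m+3-1)/2 = m+1 by omega, show 2*m+3-3 = 2*m by omega]
        push_cast; ring
      have hd4 : ((pascalD (-3/2) (2*m+3) : ℤ) : ℝ) = (-1)^(m+1) * 2^(2*m) := by
        unfold pascalD
        rw [if_neg (by omega), if_neg (by omega), if_neg (by omega), if_neg (by norm_num),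
          if_neg (by norm_num), if_neg (by norm_num), if_pos rfl,
          show (2*m+3-1)/2 = m+1 by omega, show 2*m+3-3 = 2*m by omega]
        push_cast; ring
      rw [hs, Finset.sum_insert (by norm_num), Finset.sum_insert (by norm_num),
        Finset.sum_insert (by norm_num), Finset.sum_singleton,
        hd1, hd2, hd3, hd4, hf, hf, hf, hf, if_neg (by omega)]
      have e1 : θ + ((1/2 : ℚ) : ℝ) * Real.pi = θ + Real.pi/2 := by push_cast; ring
      have e2 : θ + ((-1/2 : ℚ) : ℝ) * Real.pi = θ - Real.pi/2 := by push_cast; ring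
      have e3 : θ + ((3/2 : ℚ) : ℝ) * Real.pi = θ + (3/2)*Real.pi := by push_cast; ring
      have e4 : θ + ((-3/2 : ℚ) : ℝ) * Real.pi = θ - (3/2)*Real.pi := by push_cast; ring
      have eL : θ + ((2*m+3 : ℕ) : ℝ) * (Real.pi/2) = (θ + Real.pi/2) + (m+1 : ℕ) * Real.pi := by
        push_cast; ring
      rw [e1, e2, e3, e4, eL, cos_add_nat_mul_pi', sin_add_nat_mul_pi',
        Real.cos_add_pi_div_two, Real.sin_add_pi_div_two,
        Real.cos_sub_pi_div_two, Real.sin_sub_pi_div_two,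
        cos_add_three_halves, sin_add_three_halves,
        cos_sub_three_halves, sin_sub_three_halves]
      have hp : (2:ℝ)^(2*m+3) = 2^(2*m) * 8 := by rw [pow_add]; norm_num
      have h2m : (2:ℝ)^(2*m) ≠ 0 := by positivity
      rw [hp]
      field_simp
      ring
end
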